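/- Let γ > 1 and v* > 0. There exist constants c₁ > 0 and c₂ > 0 such that for every w ∈ (0, 2v*): (i) Q(v|w) ≥ c₁ (v − w)² for all v with 0 < v ≤ 3v*; and (ii) Q(v|w) ≥ c₂ |v − w| for all v ≥ 3v*. -/

import Mathlib

open MeasureTheory Real Set

/-- Pressure `p(v) = v^(-γ)`. -/
noncomputable def pres (γ v : ℝ) : ℝ := v ^ (-γ)

/-- Internal energy `Q(v) = v^(1-γ)/(γ-1)`. -/
noncomputable def Qint (γ v : ℝ) : ℝ := v ^ (1 - γ) / (γ - 1)

/-- Relative internal energy `Q(v|w) = Q(v) - Q(w) - Q'(w)(v-w)`, with `Q'(w) = -p(w)`. -/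
noncomputable def Qrel (γ v w : ℝ) : ℝ := Qint γ v - Qint γ w + pres γ w * (v - w)

lemma hasDerivAt_Qint (γ : ℝ) (hγ : 1 < γ) {v : ℝ} (hv : 0 < v) :
    HasDerivAt (fun x => Qint γ x) (-(v ^ (-γ))) v := by
  have hne : γ - 1 ≠ 0 := by intro h; linarith
  have h := (Real.hasDerivAt_rpow_const (x := v) (p := 1 - γ) (Or.inl hv.ne')).div_const (γ - 1)
  have h2 : HasDerivAt (fun x : ℝ => x ^ (1 - γ) / (γ - 1)) (-(v ^ (-γ))) v := by
    refine h.congr_deriv ?_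
    rw [show (1 - γ - 1) = -γ by ring]
    field_simp
    ring
  simpa [Qint] using h2

lemma hasDerivAt_pres (γ : ℝ) {v : ℝ} (hv : 0 < v) :
    HasDerivAt (fun x => pres γ x) (-γ * v ^ (-γ - 1)) v := by
  have h := Real.hasDerivAt_rpow_const (x := v) (p := -γ) (Or.inl hv.ne')
  simpa [pres] using h

lemma hasDerivAt_Qrel (γ w : ℝ) (hγ : 1 < γ) {v : ℝ} (hv : 0 < v) :
    HasDerivAt (fun x => Qrel γ x w) (pres γ w - pres γ v) v := by
  have h := ((hasDerivAt_Qint γ hγ hv).sub_const (Qint γ w)).add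
    (((hasDerivAt_id' (x := v)).sub_const w).const_mul (pres γ w))
  have h2 : HasDerivAt (fun x => Qint γ x - Qint γ w + pres γ w * (x - w))
      (pres γ w - pres γ v) v := by
    refine h.congr_deriv ?_
    simp [pres]; ring
  simpa [Qrel] using h2

/-- Key bound: `p(a) - p(b) ≥ γ B^(-γ-1) (b - a)` for `0 < a ≤ b ≤ B`. -/
lemma pres_sub_ge (γ : ℝ) (hγ : 1 < γ) {a b B : ℝ} (ha : 0 < a) (hab : a ≤ b) (hbB : b ≤ B) :
    γ * B ^ (-γ - 1) * (b - a) ≤ pres γ a - pres γ b := by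
  set c : ℝ := γ * B ^ (-γ - 1) with hc
  have hB : 0 < B := lt_of_lt_of_le (ha.trans_le hab) hbB
  have hh : ∀ x : ℝ, 0 < x → HasDerivAt (fun y => pres γ a - pres γ y - c * (y - a))
      (γ * x ^ (-γ - 1) - c) x := by
    intro x hx
    have h := ((hasDerivAt_pres γ hx).const_sub (pres γ a)).sub
      (((hasDerivAt_id' (x := x)).sub_const a).const_mul c)
    refine h.congr_deriv ?_
    ring
  have hmono : MonotoneOn (fun y => pres γ a - pres γ y - c * (y - a)) (Icc a b) := by
    apply monotoneOn_of_deriv_nonneg (convex_Icc a b)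
    · intro x hx
      exact (hh x (lt_of_lt_of_le ha hx.1)).differentiableAt.continuousAt.continuousWithinAt
    · intro x hx
      rw [interior_Icc] at hx
      exact (hh x (lt_trans ha hx.1)).differentiableAt.differentiableWithinAt
    · intro x hx
      rw [interior_Icc] at hx
      have hx0 : 0 < x := lt_trans ha hx.1
      rw [(hh x hx0).deriv]
      have hxl : B ^ (-γ - 1) ≤ x ^ (-γ - 1) :=
        Real.rpow_le_rpow_of_nonpos hx0 (le_of_lt (lt_of_lt_of_le hx.2 hbB)) (by linarith)
      have hγ0 : (0 : ℝ) < γ := by linarith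
      have : c ≤ γ * x ^ (-γ - 1) := by
        rw [hc]; exact mul_le_mul_of_nonneg_left hxl hγ0.le
      linarith
  have h0 : pres γ a - pres γ a - c * (a - a) ≤ pres γ a - pres γ b - c * (b - a) :=
    hmono (left_mem_Icc.mpr hab) (right_mem_Icc.mpr hab) hab
  simp only [sub_self, mul_zero, sub_zero] at h0
  linarith

/-- Quadratic lower bound: for `0 < v, w ≤ B`, `Qrel γ v w ≥ (γ B^(-γ-1)/2) (v-w)²`. -/
lemma Qrel_quad (γ : ℝ) (hγ : 1 < γ) {v w B : ℝ} (hv : 0 < v) (hw : 0 < w)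
    (hvB : v ≤ B) (hwB : w ≤ B) :
    γ * B ^ (-γ - 1) / 2 * (v - w) ^ 2 ≤ Qrel γ v w := by
  set c : ℝ := γ * B ^ (-γ - 1) / 2 with hc
  have hg : ∀ x : ℝ, 0 < x → HasDerivAt (fun y => Qrel γ y w - c * (y - w) ^ 2)
      (pres γ w - pres γ x - c * (2 * (x - w))) x := by
    intro x hx
    have h := (hasDerivAt_Qrel γ w hγ hx).sub
      ((((hasDerivAt_id' (x := x)).sub_const w).pow 2).const_mul c)
    refine h.congr_deriv ?_
    norm_num

  have hgw : Qrel γ w w - c * (w - w) ^ 2 = 0 := by simp [Qrel]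
  rcases le_total w v with hwv | hvw
  · have hmono : MonotoneOn (fun y => Qrel γ y w - c * (y - w) ^ 2) (Icc w v) := by
      apply monotoneOn_of_deriv_nonneg (convex_Icc w v)
      · intro x hx
        exact (hg x (lt_of_lt_of_le hw hx.1)).differentiableAt.continuousAt.continuousWithinAt
      · intro x hx
        rw [interior_Icc] at hx
        exact (hg x (lt_trans hw hx.1)).differentiableAt.differentiableWithinAt
      · intro x hx
        rw [interior_Icc] at hx
        rw [(hg x (lt_trans hw hx.1)).deriv]
        have hkey := pres_sub_ge γ hγ hw hx.1.le (le_trans hx.2.le hvB)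
        rw [hc]
        nlinarith [hx.1, hx.2]
    have h0 : Qrel γ w w - c * (w - w) ^ 2 ≤ Qrel γ v w - c * (v - w) ^ 2 :=
      hmono (left_mem_Icc.mpr hwv) (right_mem_Icc.mpr hwv) hwv
    rw [hgw] at h0
    linarith
  · have hmono : AntitoneOn (fun y => Qrel γ y w - c * (y - w) ^ 2) (Icc v w) := by
      apply antitoneOn_of_deriv_nonpos (convex_Icc v w)
      · intro x hx
        exact (hg x (lt_of_lt_of_le hv hx.1)).differentiableAt.continuousAt.continuousWithinAt
      · intro x hx
        rw [interior_Icc] at hx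
        exact (hg x (lt_trans hv hx.1)).differentiableAt.differentiableWithinAt
      · intro x hx
        rw [interior_Icc] at hx
        rw [(hg x (lt_trans hv hx.1)).deriv]
        have hkey := pres_sub_ge γ hγ (lt_trans hv hx.1) hx.2.le hwB
        rw [hc]
        nlinarith [hx.1, hx.2]
    have h0 : Qrel γ w w - c * (w - w) ^ 2 ≤ Qrel γ v w - c * (v - w) ^ 2 :=
      hmono (left_mem_Icc.mpr hvw) (right_mem_Icc.mpr hvw) hvw
    rw [hgw] at h0
    linarith

/-- Lemma A.1 (1): quadratic/linear lower bounds for the relative internal energy. -/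
theorem relative_entropy_lower_bounds (γ vstar : ℝ) (hγ : 1 < γ) (hvstar : 0 < vstar) :
    ∃ c₁ c₂ : ℝ, 0 < c₁ ∧ 0 < c₂ ∧
      ∀ w : ℝ, 0 < w → w < 2 * vstar →
        (∀ v : ℝ, 0 < v → v ≤ 3 * vstar → c₁ * (v - w) ^ 2 ≤ Qrel γ v w) ∧
        (∀ v : ℝ, 3 * vstar ≤ v → c₂ * |v - w| ≤ Qrel γ v w) := by
  have hγ0 : 0 < γ := by linarith
  set B : ℝ := 3 * vstar with hB
  have hBpos : 0 < B := by positivity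
  set c₁ : ℝ := γ * B ^ (-γ - 1) / 2 with hc₁
  have hc₁pos : 0 < c₁ := by
    have := Real.rpow_pos_of_pos hBpos (-γ - 1)
    positivity
  set d : ℝ := (2 * vstar) ^ (-γ) - B ^ (-γ) with hd
  have hdpos : 0 < d := by
    rw [hd]
    have : B ^ (-γ) < (2 * vstar) ^ (-γ) := by
      apply Real.rpow_lt_rpow_of_neg (by positivity) (by rw [hB]; linarith) (by linarith)
    linarith
  set c₂ : ℝ := min d (c₁ * vstar / 3) with hc₂
  have hc₂pos : 0 < c₂ := lt_min hdpos (by positivity)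
  refine ⟨c₁, c₂, hc₁pos, hc₂pos, fun w hw hw2 => ⟨fun v hv hvB => ?_, fun v hvB => ?_⟩⟩
  · exact Qrel_quad γ hγ hv hw hvB (by linarith)
  · have hwB : w < B := by rw [hB]; linarith
    have hvpos : 0 < v := lt_of_lt_of_le hBpos hvB
    have habs : |v - w| = v - w := abs_of_nonneg (by linarith)
    have hQB : c₁ * vstar ^ 2 ≤ Qrel γ B w := by
      have h1 := Qrel_quad γ hγ hBpos hw (le_refl B) hwB.le
      have h2 : vstar ^ 2 ≤ (B - w) ^ 2 := by nlinarith
      nlinarith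
    have hk : ∀ x : ℝ, 0 < x → HasDerivAt (fun y => Qrel γ y w - d * y)
        (pres γ w - pres γ x - d) x := by
      intro x hx
      have h := (hasDerivAt_Qrel γ w hγ hx).sub ((hasDerivAt_id' (x := x)).const_mul d)
      refine h.congr_deriv ?_
      ring
    have hmono : MonotoneOn (fun x => Qrel γ x w - d * x) (Icc B v) := by
      apply monotoneOn_of_deriv_nonneg (convex_Icc B v)
      · intro x hx
        exact (hk x (lt_of_lt_of_le hBpos hx.1)).differentiableAt.continuousAt.continuousWithinAt
      · intro x hx
        rw [interior_Icc] at hx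
        exact (hk x (lt_trans hBpos hx.1)).differentiableAt.differentiableWithinAt
      · intro x hx
        rw [interior_Icc] at hx
        have hx0 : 0 < x := lt_trans hBpos hx.1
        rw [(hk x hx0).deriv]
        have h1 : (2 * vstar) ^ (-γ) ≤ pres γ w :=
          Real.rpow_le_rpow_of_nonpos hw hw2.le (by linarith)
        have h2 : pres γ x ≤ B ^ (-γ) :=
          Real.rpow_le_rpow_of_nonpos hBpos hx.1.le (by linarith)
        rw [hd]
        unfold pres at *
        linarith
    have hm : Qrel γ B w - d * B ≤ Qrel γ v w - d * v :=
      hmono (left_mem_Icc.mpr hvB) (right_mem_Icc.mpr hvB) hvB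
    rw [habs]
    have h1 : c₂ ≤ d := min_le_left _ _
    have h2 : c₂ ≤ c₁ * vstar / 3 := min_le_right _ _
    have hvB' : 0 ≤ v - B := by linarith
    calc c₂ * (v - w) ≤ c₂ * (v - B) + c₂ * (3 * vstar) := by
          rw [hB]; nlinarith
      _ ≤ d * (v - B) + c₁ * vstar ^ 2 := by
          have := mul_le_mul_of_nonneg_right h1 hvB'
          nlinarith
      _ ≤ Qrel γ v w := by nlinarith
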